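/- (Categorical Yau twist.) Let C be a monoidal category, (M, μ, η) a monoid object in C, and f g : M ⟶ M morphisms of monoids (i.e. (f ⊗ f) ≫ μ = μ ≫ f, η ≫ f = η, and likewise for g) with f ≫ g = g ≫ f. Define μ' := (f ⊗ g) ≫ μ : M ⊗ M ⟶ M. Then the BiHom-associativity and BiHom-unitality laws hold: (μ' ⊗ g) ≫ μ' = (α_{M,M,M}).hom ≫ (f ⊗ μ') ≫ μ' as morphisms (M ⊗ M) ⊗ M ⟶ M, (η ⊗ 𝟙 M) ≫ μ' = (λ_M).hom ≫ g, and (𝟙 M ⊗ η) ≫ μ' = (ρ_M).hom ≫ f. -/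

import Mathlib

open CategoryTheory MonoidalCategory

theorem stmt_17 {C : Type*} [Category C] [MonoidalCategory C]
    (M : Mon C) (f g : M.X ⟶ M.X)
    (hfm : (f ⊗ₘ f) ≫ M.mon.mul = M.mon.mul ≫ f) (hfo : M.mon.one ≫ f = M.mon.one)
    (hgm : (g ⊗ₘ g) ≫ M.mon.mul = M.mon.mul ≫ g) (hgo : M.mon.one ≫ g = M.mon.one)
    (hfg : f ≫ g = g ≫ f) :
    ((((f ⊗ₘ g) ≫ M.mon.mul) ⊗ₘ g) ≫ ((f ⊗ₘ g) ≫ M.mon.mul) =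
        (α_ M.X M.X M.X).hom ≫ (f ⊗ₘ ((f ⊗ₘ g) ≫ M.mon.mul)) ≫ ((f ⊗ₘ g) ≫ M.mon.mul)) ∧
    ((M.mon.one ⊗ₘ 𝟙 M.X) ≫ ((f ⊗ₘ g) ≫ M.mon.mul) = (λ_ M.X).hom ≫ g) ∧
    ((𝟙 M.X ⊗ₘ M.mon.one) ≫ ((f ⊗ₘ g) ≫ M.mon.mul) = (ρ_ M.X).hom ≫ f) := by
  refine ⟨?_, ?_, ?_⟩
  · have e1 : (((f ⊗ₘ g) ≫ M.mon.mul) ⊗ₘ g) = ((f ⊗ₘ g) ⊗ₘ g) ≫ (M.mon.mul ⊗ₘ 𝟙 M.X) := by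
      rw [tensorHom_comp_tensorHom]; simp
    have e2 : (M.mon.mul ⊗ₘ 𝟙 M.X) ≫ (f ⊗ₘ g) = ((f ⊗ₘ f) ⊗ₘ g) ≫ (M.mon.mul ⊗ₘ 𝟙 M.X) := by
      rw [tensorHom_comp_tensorHom, tensorHom_comp_tensorHom]; simp [hfm]
    have e3 : f ⊗ₘ ((f ⊗ₘ g) ≫ M.mon.mul) = (f ⊗ₘ (f ⊗ₘ g)) ≫ (𝟙 M.X ⊗ₘ M.mon.mul) := by
      rw [tensorHom_comp_tensorHom]; simp
    have e4 : (𝟙 M.X ⊗ₘ M.mon.mul) ≫ (f ⊗ₘ g) = (f ⊗ₘ (g ⊗ₘ g)) ≫ (𝟙 M.X ⊗ₘ M.mon.mul) := by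
      rw [tensorHom_comp_tensorHom, tensorHom_comp_tensorHom]; simp [hgm]
    have assoc : (M.mon.mul ⊗ₘ 𝟙 M.X) ≫ M.mon.mul
        = (α_ M.X M.X M.X).hom ≫ (𝟙 M.X ⊗ₘ M.mon.mul) ≫ M.mon.mul := by
      rw [tensorHom_id, id_tensorHom, MonObj.mul_assoc M.X]
    calc (((f ⊗ₘ g) ≫ M.mon.mul) ⊗ₘ g) ≫ ((f ⊗ₘ g) ≫ M.mon.mul)
        = ((f ⊗ₘ g) ⊗ₘ g) ≫ ((f ⊗ₘ f) ⊗ₘ g) ≫ (M.mon.mul ⊗ₘ 𝟙 M.X) ≫ M.mon.mul := by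
          rw [e1, Category.assoc, ← Category.assoc (M.mon.mul ⊗ₘ 𝟙 M.X), e2]; simp
      _ = (((f ≫ f) ⊗ₘ (g ≫ f)) ⊗ₘ (g ≫ g)) ≫ (α_ M.X M.X M.X).hom ≫
            (𝟙 M.X ⊗ₘ M.mon.mul) ≫ M.mon.mul := by
          rw [tensorHom_comp_tensorHom_assoc, tensorHom_comp_tensorHom, assoc]
      _ = (α_ M.X M.X M.X).hom ≫ ((f ≫ f) ⊗ₘ ((g ≫ f) ⊗ₘ (g ≫ g))) ≫
            (𝟙 M.X ⊗ₘ M.mon.mul) ≫ M.mon.mul := by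
          rw [← Category.assoc, associator_naturality, Category.assoc]
      _ = (α_ M.X M.X M.X).hom ≫ (f ⊗ₘ ((f ⊗ₘ g) ≫ M.mon.mul)) ≫ ((f ⊗ₘ g) ≫ M.mon.mul) := by
          rw [e3, ← hfg]
          slice_rhs 3 4 => rw [e4]
          rw [tensorHom_comp_tensorHom_assoc, tensorHom_comp_tensorHom]
          simp
  · rw [tensorHom_comp_tensorHom_assoc, hfo, Category.id_comp, ← Category.id_comp M.mon.one,
      ← Category.comp_id g, ← tensorHom_comp_tensorHom_assoc, tensorHom_id, MonObj.one_mul M.X]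
    simp
  · rw [tensorHom_comp_tensorHom_assoc, hgo, Category.id_comp, ← Category.id_comp M.mon.one,
      ← Category.comp_id f, ← tensorHom_comp_tensorHom_assoc, id_tensorHom, MonObj.mul_one M.X]
    simp
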